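/- Let z : ℕ → ℝ satisfy z 1 = 1 and, for every n ≥ 1, z (n+1) = (z n + 2)/(z n + 3). Then for every n ≥ 1, z n = -1 - √3 + 2√3/(1 - (2 - √3)^(2n)). -/

import Mathlib

lemma sqrt3_lt : (Real.sqrt 3) < 2 := by
  nlinarith [Real.sq_sqrt (by norm_num : (3:ℝ) ≥ 0), Real.sqrt_nonneg 3]

lemma sqrt3_gt : (3:ℝ)/2 < Real.sqrt 3 := by
  nlinarith [Real.sq_sqrt (by norm_num : (3:ℝ) ≥ 0), Real.sqrt_nonneg 3]

lemma step_lemma (t : ℝ) (ht0 : 0 < t) (ht1 : t < 1) :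
    ((-1 - Real.sqrt 3 + 2 * Real.sqrt 3 / (1 - t)) + 2) /
      ((-1 - Real.sqrt 3 + 2 * Real.sqrt 3 / (1 - t)) + 3)
    = -1 - Real.sqrt 3 + 2 * Real.sqrt 3 / (1 - t * (7 - 4 * Real.sqrt 3)) := by
  set s := Real.sqrt 3 with hs
  have hs2 : s ^ 2 = 3 := Real.sq_sqrt (by norm_num)
  have hslt : s < 2 := sqrt3_lt
  have hsgt : (3:ℝ)/2 < s := sqrt3_gt
  have h1t : (0:ℝ) < 1 - t := by linarith
  have ha2 : 0 < 7 - 4 * s := by nlinarith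
  have h2 : 0 < 1 - t * (7 - 4 * s) := by nlinarith
  have hden : (-1 - s + 2 * s / (1 - t)) + 3 > 0 := by
    have : 2 * s / (1 - t) > 0 := by positivity
    linarith
  have hA : (1 - t) ≠ 0 := ne_of_gt h1t
  have hB : (1 - t * (7 - 4 * s)) ≠ 0 := ne_of_gt h2
  have hC : (-1 - s + 2 * s / (1 - t)) + 3 ≠ 0 := ne_of_gt hden
  rw [div_eq_iff hC]
  have hB' : 1 - t * (7 - s * 4) ≠ 0 := by contrapose! hB; linear_combination hB
  field_simp
  linear_combination (-4*s*t^3 + 4*s*t + 7*t^3 - 15*t^2 + 9*t - 1 + (4*s*t^2 + 4*s*t^3 - t + 8*t^2 - 7*t^3)) * hs2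

theorem ladder_z_closed_form (z : ℕ → ℝ) (hz1 : z 1 = 1)
    (hrec : ∀ n : ℕ, 1 ≤ n → z (n + 1) = (z n + 2) / (z n + 3)) :
    ∀ n : ℕ, 1 ≤ n →
      z n = -1 - Real.sqrt 3 + 2 * Real.sqrt 3 / (1 - (2 - Real.sqrt 3) ^ (2 * n)) := by
  have hs2 : (Real.sqrt 3) ^ 2 = 3 := Real.sq_sqrt (by norm_num)
  have hslt : Real.sqrt 3 < 2 := sqrt3_lt
  have hsgt : (3:ℝ)/2 < Real.sqrt 3 := sqrt3_gt
  have ha0 : 0 < 2 - Real.sqrt 3 := by linarith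
  have ha1 : 2 - Real.sqrt 3 < 1 := by linarith
  intro n hn
  induction n with
  | zero => omega
  | succ m ih =>
    rcases Nat.eq_or_lt_of_le hn with h | h
    · -- m + 1 = 1, i.e. m = 0
      have hm : m = 0 := by omega
      subst hm
      rw [hz1]
      have hpow : (2 - Real.sqrt 3) ^ (2 * 1) = 7 - 4 * Real.sqrt 3 := by
        ring_nf; nlinarith [hs2]
      rw [hpow]
      have hd : (1 - (7 - 4 * Real.sqrt 3)) ≠ 0 := by nlinarith
      have hd' : 1 - (7 - Real.sqrt 3 * 4) ≠ 0 := by contrapose! hd; linear_combination hd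
      field_simp
      nlinarith [hs2]
    · have hm : 1 ≤ m := by omega
      have ht0 : 0 < (2 - Real.sqrt 3) ^ (2 * m) := by positivity
      have ht1 : (2 - Real.sqrt 3) ^ (2 * m) < 1 :=
        pow_lt_one₀ (by linarith) ha1 (by omega)
      rw [hrec m hm, ih hm]
      have := step_lemma ((2 - Real.sqrt 3) ^ (2 * m)) ht0 ht1
      rw [this]
      congr 2
      have : (2 - Real.sqrt 3) ^ (2 * (m + 1)) =
          (2 - Real.sqrt 3) ^ (2 * m) * (2 - Real.sqrt 3) ^ 2 := by
        rw [← pow_add]; ring_nf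
      rw [this]
      have h2 : (2 - Real.sqrt 3) ^ 2 = 7 - 4 * Real.sqrt 3 := by
        ring_nf; nlinarith [hs2]
      rw [h2]
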